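/- Let γ ≥ 3 and κ ≥ 3 be integers, let p be a probability-distribution matrix with coupling polynomial f and reflected polynomial f̄, and let q be the probability mass function on (Fin (m+1)) × (Fin M) with q(i,j) = p(i,j). Let Q : (Fin γ × Fin κ) → (Fin (m+1) × Fin M) be a random function whose entries are independent and identically distributed according to q (i.e., Q is distributed according to the finite product of the measures induced by q), and write K(i,j) ∈ ℤ and F(i,j) ∈ ℤ for the integer values of the first and second components of Q(i,j). Call an ordered tuple (i₁,i₂,i₃,j₁,j₂,j₃), with i₁,i₂,i₃ ∈ Fin γ pairwise distinct and j₁,j₂,j₃ ∈ Fin κ pairwise distinct, active under Q if Σ_{k=1}^{3} (K(i_k,j_k) − K(i_k,j_{k+1})) = 0 and M ∣ Σ_{k=1}^{3} (F(i_k,j_k) − F(i_k,j_{k+1})), where j₄ = j₁. Then the expected number of active ordered tuples equals γ(γ−1)(γ−2)·κ(κ−1)(κ−2)·Σ_{b ∈ ℤ, M ∣ b} [f³ · f̄³]_{(0,b)}. (Since each cycle-6 candidate corresponds to exactly 6 ordered tuples, this is 6 times the paper's N₆(p) = 6·C(γ,3)·C(κ,3)·P₆(p), the expected number of cycle-6 candidates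 in the MD protograph.) -/

import Mathlib

open MeasureTheory

/-- `f_a`: the Laurent polynomial `Σ_{i,j} p(i,j) X^{a·i} Y^{a·j}` in the monoid algebra
`AddMonoidAlgebra ℝ (ℤ × ℤ)`; `fpa p 1 = f` and `fpa p (-1) = f̄`. -/
noncomputable def fpa {m M : ℕ} (p : Fin (m + 1) × Fin M → ℝ) (a : ℤ) :
    AddMonoidAlgebra ℝ (ℤ × ℤ) :=
  ∑ ij : Fin (m + 1) × Fin M,
    AddMonoidAlgebra.single (a * (ij.1 : ℤ), a * (ij.2 : ℤ)) (p ij)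

/-- `Σ_{b ∈ ℤ, M ∣ b} [g]_{(0,b)}`. -/
noncomputable def divCoeffSum (M : ℕ) (g : AddMonoidAlgebra ℝ (ℤ × ℤ)) : ℝ :=
  ∑ᶠ (b : ℤ) (_ : (M : ℤ) ∣ b), g.coeff (0, b)

/-- The discrete measure on `Fin (m+1) × Fin M` induced by the probability mass
function `q(i,j) = p(i,j)`. -/
noncomputable def qMeasure {m M : ℕ} (p : Fin (m + 1) × Fin M → ℝ) :
    Measure (Fin (m + 1) × Fin M) :=
  ∑ ij : Fin (m + 1) × Fin M, ENNReal.ofReal (p ij) • Measure.dirac ij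

open Classical in
/-- The number of active ordered tuples `(i₁,i₂,i₃,j₁,j₂,j₃)` (pairwise-distinct rows and
pairwise-distinct columns) under a relocation/partitioning assignment `Q`, where
`K(i,j)` and `F(i,j)` are the integer values of the two components of `Q(i,j)` and the
tuple is active when `Σ_k (K(i_k,j_k) − K(i_k,j_{k+1})) = 0` and
`M ∣ Σ_k (F(i_k,j_k) − F(i_k,j_{k+1}))`, with `j₄ = j₁`. -/
noncomputable def activeCount (m M γ κ : ℕ)
    (Q : Fin γ × Fin κ → Fin (m + 1) × Fin M) : ℝ :=
  ∑ i₁ : Fin γ, ∑ i₂ : Fin γ, ∑ i₃ : Fin γ, ∑ j₁ : Fin κ, ∑ j₂ : Fin κ, ∑ j₃ : Fin κ,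
    if (i₁ ≠ i₂ ∧ i₁ ≠ i₃ ∧ i₂ ≠ i₃ ∧ j₁ ≠ j₂ ∧ j₁ ≠ j₃ ∧ j₂ ≠ j₃ ∧
        ((((Q (i₁, j₁)).1 : ℤ) - ((Q (i₁, j₂)).1 : ℤ)) +
         (((Q (i₂, j₂)).1 : ℤ) - ((Q (i₂, j₃)).1 : ℤ)) +
         (((Q (i₃, j₃)).1 : ℤ) - ((Q (i₃, j₁)).1 : ℤ)) = 0) ∧
        ((M : ℤ) ∣ ((((Q (i₁, j₁)).2 : ℤ) - ((Q (i₁, j₂)).2 : ℤ)) +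
         (((Q (i₂, j₂)).2 : ℤ) - ((Q (i₂, j₃)).2 : ℤ)) +
         (((Q (i₃, j₃)).2 : ℤ) - ((Q (i₃, j₁)).2 : ℤ))))) then (1 : ℝ) else 0



open Function in
lemma facSum {ι α : Type*} [Fintype ι] [DecidableEq ι] [Fintype α] [DecidableEq α]
    (p : α → ℝ) (hp1 : ∑ a, p a = 1) {n : ℕ} (c : Fin n → ι) (hc : Function.Injective c)
    (φ : (Fin n → α) → ℝ) :
    ∑ Q : ι → α, (∏ i, p (Q i)) * φ (fun k => Q (c k)) =
      ∑ v : Fin n → α, (∏ k, p (v k)) * φ v := by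
  classical
  obtain ⟨P, hP⟩ : ∃ P : ι → Prop, P = fun i => i ∈ Set.range c := ⟨_, rfl⟩
  haveI : DecidablePred P := fun i => decidable_of_iff (i ∈ Set.range c) (by rw [hP])
  let E := Equiv.piEquivPiSubtypeProd P (fun _ => α)
  let d : Fin n ≃ {x // P x} :=
    (Equiv.ofInjective c hc).trans (Equiv.subtypeEquivRight (fun x => by rw [hP]))
  have hd : ∀ k, (d k : ι) = c k := fun k => rfl
  rw [← Equiv.sum_comp E.symm (fun Q : ι → α => (∏ i, p (Q i)) * φ (fun k => Q (c k)))]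
  rw [Fintype.sum_prod_type]
  have hQ : ∀ (u : {x // P x} → α) (w : {x // ¬ P x} → α) (i : ι),
      E.symm (u, w) i = if h : P i then u ⟨i, h⟩ else w ⟨i, h⟩ := by
    intro u w i; rfl
  have key : ∀ (u : {x // P x} → α) (w : {x // ¬ P x} → α),
      (∏ i, p (E.symm (u, w) i)) * φ (fun k => E.symm (u, w) (c k)) =
        ((∏ k, p (u (d k))) * φ (fun k => u (d k))) * ∏ i : {x // ¬ P x}, p (w i) := by
    intro u w
    have hsplit : (∏ i, p (E.symm (u, w) i)) =
        (∏ i : {x // P x}, p (u i)) * ∏ i : {x // ¬ P x}, p (w i) := by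
      rw [← Fintype.prod_subtype_mul_prod_subtype P (fun i => p (E.symm (u, w) i))]
      congr 1
      · exact Finset.prod_congr rfl fun i _ => by rw [hQ]; simp [i.2]
      · exact Finset.prod_congr rfl fun i _ => by rw [hQ]; simp [i.2]
    have h1 : (∏ i : {x // P x}, p (u i)) = ∏ k, p (u (d k)) :=
      (Equiv.prod_comp d (fun i => p (u i))).symm
    have h2 : (fun k => E.symm (u, w) (c k)) = fun k => u (d k) := by
      funext k
      rw [hQ]
      have hPc : P (c k) := by rw [hP]; exact Set.mem_range_self k
      simp only [hPc, dif_pos]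
      exact congrArg u (Subtype.ext (hd k).symm)
    rw [hsplit, h1, h2]; ring
  simp only [key]
  rw [← Finset.sum_mul_sum]
  have hw : (∑ w : {x // ¬ P x} → α, ∏ i : {x // ¬ P x}, p (w i)) = 1 := by
    rw [← Fintype.piFinset_univ, ← Finset.prod_univ_sum (fun _ => Finset.univ) (fun _ a => p a)]
    simp [hp1]
  rw [hw, mul_one]
  let e : (Fin n → α) ≃ ({x // P x} → α) := Equiv.arrowCongr d (Equiv.refl α)
  rw [← Equiv.sum_comp e (fun u : {x // P x} → α => (∏ k, p (u (d k))) * φ (fun k => u (d k)))]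
  apply Finset.sum_congr rfl
  intro v _
  have hv : ∀ k, e v (d k) = v k := by intro k; simp [e, Equiv.arrowCongr]
  simp only [hv]


lemma count3 (n : ℕ) (hn : 3 ≤ n) :
    ∑ a : Fin n, ∑ b : Fin n, ∑ c : Fin n,
      (if a ≠ b ∧ a ≠ c ∧ b ≠ c then (1:ℝ) else 0) =
      (n : ℝ) * ((n : ℝ) - 1) * ((n : ℝ) - 2) := by
  classical
  have inner : ∀ a b : Fin n, a ≠ b →
      ∑ c : Fin n, (if a ≠ b ∧ a ≠ c ∧ b ≠ c then (1:ℝ) else 0) = (n : ℝ) - 2 := by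
    intro a b hab
    have : ∀ c : Fin n, (if a ≠ b ∧ a ≠ c ∧ b ≠ c then (1:ℝ) else 0)
        = if c ∈ ({a, b}ᶜ : Finset (Fin n)) then (1:ℝ) else 0 := by
      intro c
      have hmem : c ∈ ({a, b}ᶜ : Finset (Fin n)) ↔ (a ≠ b ∧ a ≠ c ∧ b ≠ c) := by
        simp [hab]
        constructor <;> rintro ⟨h1, h2⟩ <;> exact ⟨fun h => h1 h.symm, fun h => h2 h.symm⟩
      simp only [hmem]
    simp only [this, Finset.sum_ite_mem, Finset.univ_inter, Finset.sum_const, nsmul_eq_mul,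
      mul_one, Finset.card_compl, Fintype.card_fin]
    rw [Finset.card_insert_of_notMem (by simpa using hab), Finset.card_singleton]
    rw [Nat.cast_sub (by omega)]
    norm_num [Fintype.card_fin]
  have mid : ∀ a : Fin n,
      ∑ b : Fin n, ∑ c : Fin n, (if a ≠ b ∧ a ≠ c ∧ b ≠ c then (1:ℝ) else 0)
        = ((n : ℝ) - 1) * ((n : ℝ) - 2) := by
    intro a
    have : ∀ b : Fin n, (∑ c : Fin n, if a ≠ b ∧ a ≠ c ∧ b ≠ c then (1:ℝ) else 0)
        = if b ∈ ({a}ᶜ : Finset (Fin n)) then ((n : ℝ) - 2) else 0 := by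
      intro b
      by_cases hab : a = b
      · subst hab; simp
      · rw [inner a b hab]; simp [Ne.symm hab]
    simp only [this, Finset.sum_ite_mem, Finset.univ_inter, Finset.sum_const, nsmul_eq_mul,
      Finset.card_compl, Finset.card_singleton, Fintype.card_fin]
    rw [Nat.cast_sub (by omega)]
    norm_num [Fintype.card_fin]
  simp only [mid, Finset.sum_const, nsmul_eq_mul, Finset.card_univ, Fintype.card_fin]
  ring

section
variable {m M : ℕ} (p : Fin (m + 1) × Fin M → ℝ)

private abbrev A (m M : ℕ) := Fin (m + 1) × Fin M

def sg : Fin 6 → ℤ := ![1, 1, 1, -1, -1, -1]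

/-- the exponent point of a 6-tuple -/
def epoint {m M : ℕ} (x : Fin 6 → A m M) : ℤ × ℤ :=
  (((x 0).1 : ℤ) + (x 1).1 + (x 2).1 - (x 3).1 - (x 4).1 - (x 5).1,
   ((x 0).2 : ℤ) + (x 1).2 + (x 2).2 - (x 3).2 - (x 4).2 - (x 5).2)

lemma expand_g : (fpa p 1) ^ 3 * (fpa p (-1)) ^ 3 =
    ∑ x : Fin 6 → A m M, AddMonoidAlgebra.single (epoint x) (∏ k, p (x k)) := by
  classical
  have hsg0 : sg 0 = 1 := rfl
  have hsg1 : sg 1 = 1 := rfl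
  have hsg2 : sg 2 = 1 := rfl
  have hsg3 : sg 3 = -1 := rfl
  have hsg4 : sg 4 = -1 := rfl
  have hsg5 : sg 5 = -1 := rfl
  have h1 : (fpa p 1) ^ 3 * (fpa p (-1)) ^ 3 = ∏ k : Fin 6, fpa p (sg k) := by
    rw [Fin.prod_univ_six]
    simp only [hsg0, hsg1, hsg2, hsg3, hsg4, hsg5]
    ring
  rw [h1]
  simp only [fpa]
  rw [Finset.prod_univ_sum]
  rw [Fintype.piFinset_univ]
  apply Finset.sum_congr rfl
  intro x _
  rw [AddMonoidAlgebra.prod_single]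
  congr 1
  apply Prod.ext
  · rw [Prod.fst_sum]
    rw [Fin.sum_univ_six]
    simp only [hsg0, hsg1, hsg2, hsg3, hsg4, hsg5, epoint]
    ring
  · rw [Prod.snd_sum]
    rw [Fin.sum_univ_six]
    simp only [hsg0, hsg1, hsg2, hsg3, hsg4, hsg5, epoint]
    ring

lemma coeff_eq : divCoeffSum M ((fpa p 1) ^ 3 * (fpa p (-1)) ^ 3) =
    ∑ x : Fin 6 → A m M, (∏ k, p (x k)) *
      (if ((epoint x).1 = 0 ∧ (M : ℤ) ∣ (epoint x).2) then (1:ℝ) else 0) := by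
  classical
  have gapp : ∀ b : ℤ,
      (∑ x : Fin 6 → A m M, AddMonoidAlgebra.single (epoint x) (∏ k, p (x k))).coeff (0, b) =
      ∑ x : Fin 6 → A m M, (if epoint x = (0, b) then (∏ k, p (x k)) else 0) := by
    intro b
    rw [AddMonoidAlgebra.coeff_sum, Finsupp.finset_sum_apply]
    apply Finset.sum_congr rfl
    intro x _
    rw [AddMonoidAlgebra.coeff_single, Finsupp.single_apply]
  set T : Finset ℤ := Finset.image (fun x : Fin 6 → A m M => (epoint x).2) Finset.univ with hT
  have hsupp : Function.support (Set.indicator {b : ℤ | (M : ℤ) ∣ b}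
      (fun b => (∑ x : Fin 6 → A m M,
        AddMonoidAlgebra.single (epoint x) (∏ k, p (x k))).coeff (0, b))) ⊆ T := by
    intro b hb
    rw [Function.mem_support] at hb
    have hgb : (∑ x : Fin 6 → A m M,
        AddMonoidAlgebra.single (epoint x) (∏ k, p (x k))).coeff (0, b) ≠ 0 := by
      intro h
      apply hb
      simp only [Set.indicator_apply, h, ite_self]
    rw [gapp] at hgb
    obtain ⟨x, _, hx⟩ := Finset.exists_ne_zero_of_sum_ne_zero hgb
    have hex : epoint x = (0, b) := by
      by_contra h
      simp [h] at hx
    simp only [hT, Finset.coe_image, Set.mem_image]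
    exact ⟨x, Finset.mem_coe.mpr (Finset.mem_univ x), by rw [hex]⟩
  rw [divCoeffSum, expand_g]
  refine ((finsum_mem_def {b : ℤ | (M : ℤ) ∣ b}
    (fun b => (∑ x : Fin 6 → A m M,
      AddMonoidAlgebra.single (epoint x) (∏ k, p (x k))).coeff (0, b))).trans ?_)
  rw [finsum_eq_sum_of_support_subset _ hsupp]
  have step : ∀ b ∈ T, Set.indicator {b : ℤ | (M : ℤ) ∣ b}
      (fun b => (∑ x : Fin 6 → A m M,
        AddMonoidAlgebra.single (epoint x) (∏ k, p (x k))).coeff (0, b)) b =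
      ∑ x : Fin 6 → A m M, (if b = (epoint x).2 then
        (if (epoint x).1 = 0 ∧ (M : ℤ) ∣ (epoint x).2 then (∏ k, p (x k)) else 0) else 0) := by
    intro b _
    rw [Set.indicator_apply]
    by_cases hMb : (M : ℤ) ∣ b
    · rw [if_pos (by exact hMb), gapp]
      apply Finset.sum_congr rfl
      intro x _
      by_cases hbx : b = (epoint x).2
      · subst hbx
        rw [if_pos rfl]
        by_cases h1 : (epoint x).1 = 0
        · have hex : epoint x = (0, (epoint x).2) := Prod.ext h1 rfl
          rw [if_pos hex, if_pos ⟨h1, hMb⟩]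
        · have hex : ¬ (epoint x = (0, (epoint x).2)) := fun h => h1 (by rw [h])
          rw [if_neg hex, if_neg (fun h => h1 h.1)]
      · rw [if_neg (fun h => hbx (by rw [h])), if_neg hbx]
    · rw [if_neg (by exact hMb)]
      symm
      apply Finset.sum_eq_zero
      intro x _
      by_cases hbx : b = (epoint x).2
      · subst hbx
        rw [if_pos rfl]
        exact if_neg (fun h => hMb h.2)
      · exact if_neg hbx
  rw [Finset.sum_congr rfl step, Finset.sum_comm]
  apply Finset.sum_congr rfl
  intro x _
  have hmem : (epoint x).2 ∈ T := by
    simp only [hT, Finset.mem_image]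
    exact ⟨x, Finset.mem_univ x, rfl⟩
  rw [Finset.sum_ite_eq' T ((epoint x).2)
    (fun _ => (if (epoint x).1 = 0 ∧ (M : ℤ) ∣ (epoint x).2 then (∏ k, p (x k)) else 0)),
    if_pos hmem]
  rw [mul_ite, mul_one, mul_zero]

end

lemma qMeasure_singleton {m M : ℕ} (p : Fin (m + 1) × Fin M → ℝ) (x : Fin (m + 1) × Fin M) :
    qMeasure p {x} = ENNReal.ofReal (p x) := by
  classical
  simp [qMeasure, Measure.finset_sum_apply, Measure.dirac_apply' _ (measurableSet_singleton x),
    Set.indicator_apply, Finset.sum_ite_eq']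

lemma qMeasure_prob {m M : ℕ} (p : Fin (m + 1) × Fin M → ℝ) (hp0 : ∀ ij, 0 ≤ p ij)
    (hp1 : ∑ ij : Fin (m + 1) × Fin M, p ij = 1) :
    IsProbabilityMeasure (qMeasure p) := by
  constructor
  simp [qMeasure, Measure.finset_sum_apply]
  rw [← ENNReal.ofReal_sum_of_nonneg (fun i _ => hp0 i), hp1, ENNReal.ofReal_one]

lemma integral_reduce {m M γ κ : ℕ} (p : Fin (m + 1) × Fin M → ℝ) (hp0 : ∀ ij, 0 ≤ p ij)
    (hp1 : ∑ ij : Fin (m + 1) × Fin M, p ij = 1)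
    (f : (Fin γ × Fin κ → Fin (m + 1) × Fin M) → ℝ) :
    ∫ Q : Fin γ × Fin κ → Fin (m + 1) × Fin M, f Q
        ∂(Measure.pi fun _ : Fin γ × Fin κ => qMeasure p) =
      ∑ Q : Fin γ × Fin κ → Fin (m + 1) × Fin M, (∏ ij, p (Q ij)) * f Q := by
  classical
  haveI : IsProbabilityMeasure (qMeasure p) := qMeasure_prob p hp0 hp1
  haveI : IsProbabilityMeasure (Measure.pi fun _ : Fin γ × Fin κ => qMeasure p) :=
    MeasureTheory.Measure.pi.instIsProbabilityMeasure _
  rw [integral_fintype Integrable.of_finite]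
  apply Finset.sum_congr rfl
  intro Q _
  rw [measureReal_def, ← Set.univ_pi_singleton Q, Measure.pi_pi]
  simp only [qMeasure_singleton]
  rw [← ENNReal.ofReal_prod_of_nonneg (fun i _ => hp0 (Q i)),
    ENNReal.toReal_ofReal (Finset.prod_nonneg fun i _ => hp0 (Q i)), smul_eq_mul]

open Classical in
noncomputable def Ind (m M γ κ : ℕ)
    (t : Fin γ × Fin γ × Fin γ × Fin κ × Fin κ × Fin κ)
    (Q : Fin γ × Fin κ → A m M) : ℝ :=
  if (t.1 ≠ t.2.1 ∧ t.1 ≠ t.2.2.1 ∧ t.2.1 ≠ t.2.2.1 ∧ t.2.2.2.1 ≠ t.2.2.2.2.1 ∧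
      t.2.2.2.1 ≠ t.2.2.2.2.2 ∧ t.2.2.2.2.1 ≠ t.2.2.2.2.2 ∧
      ((((Q (t.1, t.2.2.2.1)).1 : ℤ) - ((Q (t.1, t.2.2.2.2.1)).1 : ℤ)) +
       (((Q (t.2.1, t.2.2.2.2.1)).1 : ℤ) - ((Q (t.2.1, t.2.2.2.2.2)).1 : ℤ)) +
       (((Q (t.2.2.1, t.2.2.2.2.2)).1 : ℤ) - ((Q (t.2.2.1, t.2.2.2.1)).1 : ℤ)) = 0) ∧
      ((M : ℤ) ∣ ((((Q (t.1, t.2.2.2.1)).2 : ℤ) - ((Q (t.1, t.2.2.2.2.1)).2 : ℤ)) +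
       (((Q (t.2.1, t.2.2.2.2.1)).2 : ℤ) - ((Q (t.2.1, t.2.2.2.2.2)).2 : ℤ)) +
       (((Q (t.2.2.1, t.2.2.2.2.2)).2 : ℤ) - ((Q (t.2.2.1, t.2.2.2.1)).2 : ℤ)))))
  then (1 : ℝ) else 0

lemma activeCount_eq {m M γ κ : ℕ} (Q : Fin γ × Fin κ → A m M) :
    activeCount m M γ κ Q = ∑ t : Fin γ × Fin γ × Fin γ × Fin κ × Fin κ × Fin κ,
      Ind m M γ κ t Q := by
  simp only [activeCount, Ind, Fintype.sum_prod_type]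


set_option maxHeartbeats 1000000 in
/-- when the entries of `Q` are i.i.d. with law `q(i,j) = p(i,j)`, the
expected number of active ordered tuples is
`γ(γ−1)(γ−2)·κ(κ−1)(κ−2)·Σ_{M ∣ b} [f³·f̄³]_{(0,b)}`. -/
theorem stmt1 {m M γ κ : ℕ} (hm : 1 ≤ m) (hM : 2 ≤ M) (hγ : 3 ≤ γ) (hκ : 3 ≤ κ)
    (p : Fin (m + 1) × Fin M → ℝ) (hp0 : ∀ ij, 0 ≤ p ij)
    (hp1 : ∑ ij : Fin (m + 1) × Fin M, p ij = 1) :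
    ∫ Q : Fin γ × Fin κ → Fin (m + 1) × Fin M, activeCount m M γ κ Q
        ∂(Measure.pi fun _ : Fin γ × Fin κ => qMeasure p) =
      (γ : ℝ) * ((γ : ℝ) - 1) * ((γ : ℝ) - 2) *
        ((κ : ℝ) * ((κ : ℝ) - 1) * ((κ : ℝ) - 2)) *
        divCoeffSum M ((fpa p 1) ^ 3 * (fpa p (-1)) ^ 3) := by
  classical
  set S : ℝ := ∑ x : Fin 6 → A m M, (∏ k, p (x k)) *
      (if ((epoint x).1 = 0 ∧ (M : ℤ) ∣ (epoint x).2) then (1:ℝ) else 0) with hS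
  rw [integral_reduce p hp0 hp1]
  have key : ∀ t : Fin γ × Fin γ × Fin γ × Fin κ × Fin κ × Fin κ,
      ∑ Q : Fin γ × Fin κ → A m M, (∏ ij, p (Q ij)) * Ind m M γ κ t Q =
      (if t.1 ≠ t.2.1 ∧ t.1 ≠ t.2.2.1 ∧ t.2.1 ≠ t.2.2.1 then (1:ℝ) else 0) *
      ((if t.2.2.2.1 ≠ t.2.2.2.2.1 ∧ t.2.2.2.1 ≠ t.2.2.2.2.2 ∧ t.2.2.2.2.1 ≠ t.2.2.2.2.2
        then (1:ℝ) else 0) * S) := by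
    rintro ⟨i₁, i₂, i₃, j₁, j₂, j₃⟩
    by_cases hD : i₁ ≠ i₂ ∧ i₁ ≠ i₃ ∧ i₂ ≠ i₃ ∧ j₁ ≠ j₂ ∧ j₁ ≠ j₃ ∧ j₂ ≠ j₃
    · obtain ⟨h12, h13, h23, g12, g13, g23⟩ := hD
      rw [if_pos ⟨h12, h13, h23⟩, if_pos ⟨g12, g13, g23⟩, one_mul, one_mul]
      have hc : Function.Injective
          (![(i₁, j₁), (i₂, j₂), (i₃, j₃), (i₁, j₂), (i₂, j₃), (i₃, j₁)] :
            Fin 6 → Fin γ × Fin κ) := by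
        intro a b hab
        fin_cases a <;> fin_cases b <;>
          simp only [Matrix.cons_val_zero, Matrix.cons_val_one, Matrix.head_cons,
            Matrix.cons_val_two, Matrix.tail_cons, Matrix.cons_val_three, Matrix.cons_val_four,
            Matrix.cons_val_succ, Matrix.cons_val_fin_one, Prod.mk.injEq, Fin.isValue]
            at hab ⊢ <;>
          first
            | rfl
            | (exfalso; obtain ⟨ha, hb⟩ := hab; tauto)
      set c : Fin 6 → Fin γ × Fin κ :=
        ![(i₁, j₁), (i₂, j₂), (i₃, j₃), (i₁, j₂), (i₂, j₃), (i₃, j₁)] with hcdef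
      have step : ∀ Q : Fin γ × Fin κ → A m M,
          Ind m M γ κ (i₁, i₂, i₃, j₁, j₂, j₃) Q =
          (fun v : Fin 6 → A m M =>
            if ((epoint v).1 = 0 ∧ (M : ℤ) ∣ (epoint v).2) then (1:ℝ) else 0)
            (fun k => Q (c k)) := by
        intro Q
        simp only [Ind]
        have hc0 : c 0 = (i₁, j₁) := rfl
        have hc1 : c 1 = (i₂, j₂) := rfl
        have hc2 : c 2 = (i₃, j₃) := rfl
        have hc3 : c 3 = (i₁, j₂) := rfl
        have hc4 : c 4 = (i₂, j₃) := rfl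
        have hc5 : c 5 = (i₃, j₁) := rfl
        simp only [epoint, hc0, hc1, hc2, hc3, hc4, hc5]
        refine if_congr ?_ rfl rfl
        constructor
        · rintro ⟨-, -, -, -, -, -, he, hd⟩
          constructor
          · omega
          · convert hd using 1; ring
        · rintro ⟨he, hd⟩
          refine ⟨h12, h13, h23, g12, g13, g23, by omega, ?_⟩
          convert hd using 1; ring
      simp only [step]
      exact facSum p hp1 c hc (fun v => if ((epoint v).1 = 0 ∧ (M : ℤ) ∣ (epoint v).2) then (1:ℝ) else 0)
    · have hz : ∀ Q : Fin γ × Fin κ → A m M,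
          Ind m M γ κ (i₁, i₂, i₃, j₁, j₂, j₃) Q = 0 := by
        intro Q
        rw [Ind, if_neg]
        rintro ⟨a1, a2, a3, a4, a5, a6, -, -⟩
        exact hD ⟨a1, a2, a3, a4, a5, a6⟩
      simp only [hz, mul_zero, Finset.sum_const_zero]
      by_cases hr : i₁ ≠ i₂ ∧ i₁ ≠ i₃ ∧ i₂ ≠ i₃
      · rw [if_pos hr]
        have : ¬ (j₁ ≠ j₂ ∧ j₁ ≠ j₃ ∧ j₂ ≠ j₃) := by tauto
        rw [if_neg this, zero_mul, mul_zero]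
      · rw [if_neg hr, zero_mul]
  calc ∑ Q : Fin γ × Fin κ → A m M, (∏ ij, p (Q ij)) * activeCount m M γ κ Q
      = ∑ t : Fin γ × Fin γ × Fin γ × Fin κ × Fin κ × Fin κ,
          ∑ Q : Fin γ × Fin κ → A m M, (∏ ij, p (Q ij)) * Ind m M γ κ t Q := by
        simp only [activeCount_eq, Finset.mul_sum]
        rw [Finset.sum_comm]
    _ = ∑ t : Fin γ × Fin γ × Fin γ × Fin κ × Fin κ × Fin κ,
          (if t.1 ≠ t.2.1 ∧ t.1 ≠ t.2.2.1 ∧ t.2.1 ≠ t.2.2.1 then (1:ℝ) else 0) *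
          ((if t.2.2.2.1 ≠ t.2.2.2.2.1 ∧ t.2.2.2.1 ≠ t.2.2.2.2.2 ∧
              t.2.2.2.2.1 ≠ t.2.2.2.2.2 then (1:ℝ) else 0) * S) := by
        exact Finset.sum_congr rfl fun t _ => key t
    _ = (γ : ℝ) * ((γ : ℝ) - 1) * ((γ : ℝ) - 2) *
        ((κ : ℝ) * ((κ : ℝ) - 1) * ((κ : ℝ) - 2)) *
        divCoeffSum M ((fpa p 1) ^ 3 * (fpa p (-1)) ^ 3) := by
        rw [coeff_eq p, ← hS]
        rw [Fintype.sum_prod_type]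
        conv_lhs => enter [2, i₁]; rw [Fintype.sum_prod_type]; enter [2, i₂]
                    rw [Fintype.sum_prod_type]; enter [2, i₃]; rw [Fintype.sum_prod_type]
                    enter [2, j₁]; rw [Fintype.sum_prod_type]
        dsimp only
        change ∑ i₁ : Fin γ, ∑ i₂ : Fin γ, ∑ i₃ : Fin γ, ∑ j₁ : Fin κ, ∑ x : Fin κ, ∑ y : Fin κ,
          (if i₁ ≠ i₂ ∧ i₁ ≠ i₃ ∧ i₂ ≠ i₃ then (1:ℝ) else 0) *
            ((if j₁ ≠ x ∧ j₁ ≠ y ∧ x ≠ y then (1:ℝ) else 0) * S) = _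
        simp only [← Finset.mul_sum]
        simp only [← Finset.sum_mul]
        rw [count3 γ hγ, count3 κ hκ]
        ring
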